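/- Let W = ⟨S|M⟩ be a finite rank Coxeter system and let n = (n_1,…,n_{|S|}) ∈ ℕ^{|S|} with n_i ≥ 1 and n_i = n_j whenever C_i = C_j. Define a new Coxeter system W̃_n = ⟨S_n | M_n⟩ with generating set S_n = {s_{i,k} : 1 ≤ i ≤ |S|, 1 ≤ k ≤ n_i} and, for distinct generators, labels m_{s_{i,k},s_{j,l}} = m_{i,j} if C_i = C_j and k = l, m_{s_{i,k},s_{j,l}} = 2 if C_i = C_j and k ≠ l, and m_{s_{i,k},s_{j,l}} = m_{i,j} if C_i ≠ C_j. Then the assignment s_i ↦ s_{i,1}s_{i,2}⋯s_{i,n_i} extends to an injective group homomorphism φ_n : W → W̃_n which maps reduced expressions to reduced expressions; moreover, denoting by ψ̃_n the word length of W̃_n, for every w ∈ W with reduced expression w = w_1⋯w_k one has ψ̃_n(φ_n(w)) = Σ_{i=1}^{|S|} n_i·|{l : w_l = s_i}|. -/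

import Mathlib

open CoxeterSystem Classical

/-- The graph `Graph'_S(W)` on the generators, with an edge `{s_i, s_j}` whenever
`3 ≤ m_{i,j} < ∞` (in the `CoxeterMatrix` encoding `0` stands for `∞`, so this is
`3 ≤ M i j`). -/
def finGraph {B : Type*} (M : CoxeterMatrix B) : SimpleGraph B where
  Adj x y := x ≠ y ∧ 3 ≤ M x y
  symm := by
    constructor
    intro x y h
    exact ⟨h.1.symm, M.symmetric x y ▸ h.2⟩
  loopless := by
    constructor
    intro x h
    exact h.1 rfl

/-- The expansion of a word in the generators `S` of `W` into a word in the generators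
`S_n = {s_{i,k} : 1 ≤ k ≤ n_i}` of the doubled system, replacing each letter `s_i` by
`s_{i,1} s_{i,2} ⋯ s_{i,n_i}`. -/
def expandWord {B : Type*} (n : B → ℕ) (ω : List B) : List ((i : B) × Fin (n i)) :=
  ω.flatMap fun i => List.ofFn fun k : Fin (n i) => (⟨i, k⟩ : (i : B) × Fin (n i))

open List

namespace ProofAux

theorem prod_map_alternatingWord_two_mul {G : Type*} [Monoid G] {B : Type*} (i j : B)
    (f : B → G) (m : ℕ) :
    ((alternatingWord i j (2 * m)).map f).prod = (f i * f j) ^ m := by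
  induction m with
  | zero => simp [alternatingWord]
  | succ m ih =>
    have h : 2 * (m + 1) = (2 * m + 1) + 1 := by ring
    rw [h, alternatingWord_succ', alternatingWord_succ']
    have h1 : ¬ Even (2 * m + 1) := by simp [Nat.even_add_one]
    have h2 : Even (2 * m) := even_two_mul m
    rw [if_neg h1, if_pos h2]
    simp only [List.map_cons, List.prod_cons]
    rw [ih, pow_succ']
    simp [mul_assoc]

variable {B : Type*} {M : CoxeterMatrix B} {W : Type*} [Group W] (cs : CoxeterSystem M W)

local prefix:100 "s" => cs.simple
local prefix:100 "π" => cs.wordProd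
local prefix:100 "ris" => cs.rightInvSeq

theorem rightInvSeq_cons (i : B) (ω : List B) :
    ris (i :: ω) = ((π ω)⁻¹ * (s i) * (π ω)) :: ris ω := rfl

theorem head_invSeq_alternating (i j : B) (e : ℕ) :
    (π (alternatingWord i j e))⁻¹ * (s (if Even e then j else i)) * π (alternatingWord i j e)
      = (s j) * ((s i) * (s j)) ^ e := by
  rw [cs.prod_alternatingWord_eq_mul_pow]
  set a := s i with ha'
  set b := s j with hb'
  have hb : b * b = 1 := cs.simple_mul_simple_self j
  have hbinv : b⁻¹ = b := cs.inv_simple j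
  have hainv : a⁻¹ = a := cs.inv_simple i
  have hpinv : (a * b)⁻¹ = b * a := by rw [mul_inv_rev, hainv, hbinv]
  have key : ∀ k : ℕ, ((a * b) ^ k)⁻¹ * b = b * (a * b) ^ k := by
    intro k
    induction k with
    | zero => simp
    | succ k ihk =>
      rw [pow_succ', mul_inv_rev, hpinv, mul_assoc]
      have h : b * a * b = b * (a * b) := by rw [mul_assoc]
      rw [h, ← mul_assoc, ihk, mul_assoc, ← pow_succ, pow_succ']
  by_cases he : Even e
  · rw [if_pos he, if_pos he, one_mul]
    obtain ⟨c, hc⟩ := he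
    subst hc
    have h2 : (c + c) / 2 = c := by omega
    rw [h2, key c, mul_assoc, ← pow_add]
  · rw [if_neg he, if_neg he]
    obtain ⟨k, hk⟩ := Nat.not_even_iff_odd.mp he
    subst hk
    have h2 : (2 * k + 1) / 2 = k := by omega
    rw [h2, mul_inv_rev, hbinv, mul_assoc ((a * b) ^ k)⁻¹ b a]
    rw [← mul_assoc (((a * b) ^ k)⁻¹ * (b * a))]
    have h3 : ((a * b) ^ k)⁻¹ * (b * a) * b = ((a * b) ^ k)⁻¹ * b * (a * b) := by
      simp [mul_assoc]
    rw [h3, key k]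
    have h4 : 2 * k + 1 = k + (1 + k) := by ring
    rw [h4, pow_add, pow_add, pow_one]
    simp [mul_assoc]

theorem rightInvSeq_alternatingWord (i j : B) (e : ℕ) :
    ris (alternatingWord i j e) =
      ((List.range e).reverse).map (fun k => (s j) * ((s i) * (s j)) ^ k) := by
  induction e with
  | zero => simp [alternatingWord]
  | succ e ih =>
    rw [alternatingWord_succ', rightInvSeq_cons, ih, List.range_succ]
    simp only [List.reverse_append, List.reverse_cons, List.reverse_nil, List.nil_append,
      List.cons_append, List.map_cons]
    congr 1
    exact head_invSeq_alternating cs i j e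

end ProofAux

namespace ProofAux

variable {B : Type*} {M : CoxeterMatrix B} {W : Type*} [Group W] (cs : CoxeterSystem M W)

local prefix:100 "s" => cs.simple
local prefix:100 "π" => cs.wordProd
local prefix:100 "ris" => cs.rightInvSeq

/-- The standard permutation action used to prove inversion-counting results. -/
noncomputable def sigmaPerm (i : B) : Equiv.Perm (W × ℤˣ) :=
  Function.Involutive.toPerm
    (fun te => (s i * te.1 * s i, if te.1 = s i then -te.2 else te.2))
    (by
      intro ⟨t, ε⟩
      have hss : s i * s i = 1 := cs.simple_mul_simple_self i
      simp only
      have h1 : s i * (s i * t * s i) * s i = t := by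
        calc s i * (s i * t * s i) * s i = (s i * s i) * t * (s i * s i) := by group
          _ = t := by rw [hss]; group
      have hiff : s i * t * s i = s i ↔ t = s i := by
        constructor
        · intro h
          have := congrArg (fun x => s i * x * s i) h
          rw [h1] at this
          rw [this]
          calc s i * s i * s i = (s i * s i) * s i := rfl
            _ = s i := by rw [hss]; group
        · intro h; rw [h]
          calc s i * s i * s i = (s i * s i) * s i := rfl
            _ = s i := by rw [hss]; group
      by_cases h : t = s i
      · rw [if_pos h, if_pos (hiff.mpr h), h1]
        simp
      · rw [if_neg h, if_neg (fun hc => h (hiff.mp hc)), h1])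

theorem sigmaPerm_apply (i : B) (t : W) (ε : ℤˣ) :
    sigmaPerm cs i (t, ε) = (s i * t * s i, if t = s i then -ε else ε) := rfl

theorem prod_sigmaPerm_apply (ω : List B) (t : W) (ε : ℤˣ) :
    (ω.map (sigmaPerm cs)).prod (t, ε)
      = (π ω * t * (π ω)⁻¹, (-1 : ℤˣ) ^ (List.count t (ris ω)) * ε) := by
  induction ω generalizing t ε with
  | nil => simp
  | cons i ω' ih =>
    rw [List.map_cons, List.prod_cons, Equiv.Perm.mul_apply, ih, sigmaPerm_apply,
      rightInvSeq_cons]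
    have hfst : s i * (π ω' * t * (π ω')⁻¹) * s i = π (i :: ω') * t * (π (i :: ω'))⁻¹ := by
      rw [cs.wordProd_cons, mul_inv_rev, cs.inv_simple]
      group
    have hiff : π ω' * t * (π ω')⁻¹ = s i ↔ t = (π ω')⁻¹ * s i * π ω' := by
      constructor
      · intro h
        have := congrArg (fun x => (π ω')⁻¹ * x * π ω') h
        rw [← this]; group
      · intro h; rw [h]; group
    by_cases h : t = (π ω')⁻¹ * s i * π ω'
    · rw [if_pos (hiff.mpr h)]
      have hc : List.count t (((π ω')⁻¹ * s i * π ω') :: ris ω')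
          = List.count t (ris ω') + 1 := by
        rw [List.count_cons]
        simp [h]
      rw [hc, hfst, pow_succ]
      congr 1
      rw [mul_neg_one, neg_mul]
    · rw [if_neg (fun hc => h (hiff.mp hc))]
      have hc : List.count t (((π ω')⁻¹ * s i * π ω') :: ris ω')
          = List.count t (ris ω') := by
        rw [List.count_cons]
        simp [h, Ne.symm h]
      rw [hc, hfst]

theorem sigma_liftable : M.IsLiftable (sigmaPerm cs) := by
  intro i j
  by_cases hij : i = j
  · subst hij
    rw [M.diagonal, pow_one]
    apply Equiv.ext
    intro p
    rw [Equiv.Perm.mul_apply]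
    show sigmaPerm cs i (sigmaPerm cs i p) = p
    exact (sigmaPerm cs i).symm_apply_apply p
  · by_cases h0 : M i j = 0
    · rw [h0, pow_zero]
    · rw [← prod_map_alternatingWord_two_mul i j (sigmaPerm cs) (M i j)]
      apply Equiv.ext
      intro ⟨t, ε⟩
      rw [prod_sigmaPerm_apply]
      have hπ : π (alternatingWord i j (2 * M i j)) = 1 := by
        have h1 : π (alternatingWord i j (2 * M i j))
            = ((alternatingWord i j (2 * M i j)).map cs.simple).prod := rfl
        rw [h1, prod_map_alternatingWord_two_mul i j cs.simple (M i j)]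
        exact cs.simple_mul_simple_pow i j
      have hcount : Even (List.count t (ris (alternatingWord i j (2 * M i j)))) := by
        rw [rightInvSeq_alternatingWord, List.map_reverse, List.count_reverse, two_mul,
          List.range_add, List.map_append, List.count_append, List.map_map]
        have hmap : (List.range (M i j)).map
              ((fun k => (s j) * ((s i) * (s j)) ^ k) ∘ (M i j + ·))
            = (List.range (M i j)).map (fun k => (s j) * ((s i) * (s j)) ^ k) := by
          apply List.map_congr_left
          intro k _
          simp only [Function.comp_apply]
          rw [pow_add, cs.simple_mul_simple_pow i j, one_mul]
        rw [hmap]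
        exact ⟨_, rfl⟩
      rw [hπ, hcount.neg_one_pow]
      simp

/-- The homomorphism from `W` induced by the permutation representation. -/
noncomputable def sigmaHom : W →* Equiv.Perm (W × ℤˣ) :=
  cs.lift ⟨sigmaPerm cs, sigma_liftable cs⟩

theorem sigmaHom_wordProd (ω : List B) :
    sigmaHom cs (π ω) = (ω.map (sigmaPerm cs)).prod := by
  have h1 : π ω = (ω.map cs.simple).prod := rfl
  rw [h1, MonoidHom.map_list_prod, List.map_map]
  congr 1
  apply List.map_congr_left
  intro i _
  exact cs.lift_apply_simple (sigma_liftable cs) i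

theorem count_rightInvSeq_mod_two_eq (ω ω' : List B) (h : π ω = π ω') (t : W) :
    List.count t (ris ω) % 2 = List.count t (ris ω') % 2 := by
  have h1 : (ω.map (sigmaPerm cs)).prod = (ω'.map (sigmaPerm cs)).prod := by
    rw [← sigmaHom_wordProd, ← sigmaHom_wordProd, h]
  have h2 := congrArg (fun g : Equiv.Perm (W × ℤˣ) => (g (t, 1)).2) h1
  simp only [prod_sigmaPerm_apply, mul_one] at h2
  rcases Nat.even_or_odd (List.count t (ris ω)) with he | ho <;>
    rcases Nat.even_or_odd (List.count t (ris ω')) with he' | ho'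
  · rw [Nat.even_iff.mp he, Nat.even_iff.mp he']
  · rw [he.neg_one_pow, ho'.neg_one_pow] at h2
    exact absurd h2 (by decide)
  · rw [ho.neg_one_pow, he'.neg_one_pow] at h2
    exact absurd h2 (by decide)
  · rw [Nat.odd_iff.mp ho, Nat.odd_iff.mp ho']

theorem isReduced_of_nodup_rightInvSeq (ω : List B) (h : (ris ω).Nodup) :
    cs.IsReduced ω := by
  have hle := cs.length_wordProd_le ω
  suffices hge : ω.length ≤ cs.length (π ω) by
    unfold CoxeterSystem.IsReduced
    omega
  obtain ⟨ρ, hρl, hρ⟩ := cs.exists_reduced_word (π ω)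
  have hsub : ris ω ⊆ ris ρ := by
    intro t ht
    have c1 : List.count t (ris ω) = 1 := List.count_eq_one_of_mem h ht
    have c2 : List.count t (ris ρ) % 2 = 1 := by
      rw [← count_rightInvSeq_mod_two_eq cs ω ρ hρ t, c1]
    have : List.count t (ris ρ) ≠ 0 := by omega
    rw [Ne, List.count_eq_zero] at this
    exact not_not.mp (fun hc => this (fun hm => hc hm))
  have hsp : ris ω <+~ ris ρ := List.Nodup.subperm h hsub
  have := hsp.length_le
  rw [cs.length_rightInvSeq, cs.length_rightInvSeq] at this
  have := hρl.eq; rw [← hρ] at this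
  omega

end ProofAux

namespace ProofAux

section GroupLemmas

variable {G : Type*} [Group G]

theorem prod_ofFn_mul_prod_ofFn {N : ℕ} (a b : Fin N → G)
    (hab : ∀ k l, k ≠ l → Commute (a k) (b l)) :
    (List.ofFn a).prod * (List.ofFn b).prod = (List.ofFn fun k => a k * b k).prod := by
  induction N with
  | zero => simp
  | succ N ih =>
    rw [List.ofFn_succ, List.ofFn_succ, List.ofFn_succ, List.prod_cons, List.prod_cons,
      List.prod_cons]
    have hcomm : Commute ((List.ofFn fun i => a i.succ).prod) (b 0) := by
      apply (Commute.list_prod_right _ _ ?_).symm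
      intro x hx
      obtain ⟨k, rfl⟩ := List.mem_ofFn.mp hx
      exact ((hab k.succ 0 (Fin.succ_ne_zero k)).symm)
    calc a 0 * (List.ofFn fun i => a i.succ).prod * (b 0 * (List.ofFn fun i => b i.succ).prod)
        = a 0 * ((List.ofFn fun i => a i.succ).prod * b 0) * (List.ofFn fun i => b i.succ).prod
          := by group
      _ = a 0 * (b 0 * (List.ofFn fun i => a i.succ).prod) * (List.ofFn fun i => b i.succ).prod
          := by rw [hcomm]
      _ = (a 0 * b 0) * ((List.ofFn fun i => a i.succ).prod * (List.ofFn fun i => b i.succ).prod)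
          := by group
      _ = (a 0 * b 0) * (List.ofFn fun k => a k.succ * b k.succ).prod := by
          rw [ih _ _ (fun k l h => hab k.succ l.succ (fun hc => h (Fin.succ_injective N hc)))]

theorem prod_ofFn_pow {N : ℕ} (c : Fin N → G) (m : ℕ)
    (hcc : ∀ k l, k ≠ l → Commute (c k) (c l)) :
    ((List.ofFn c).prod) ^ m = (List.ofFn fun k => (c k) ^ m).prod := by
  induction N with
  | zero => simp
  | succ N ih =>
    rw [List.ofFn_succ, List.ofFn_succ, List.prod_cons, List.prod_cons]
    have hcomm : Commute (c 0) ((List.ofFn fun i => c i.succ).prod) := by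
      apply Commute.list_prod_right
      intro x hx
      obtain ⟨k, rfl⟩ := List.mem_ofFn.mp hx
      exact hcc 0 k.succ (Ne.symm (Fin.succ_ne_zero k))
    rw [hcomm.mul_pow, ih _ (fun k l h => hcc k.succ l.succ (fun hc => h (Fin.succ_injective N hc)))]

theorem prod_ofFn_ite {N κ : ℕ} (h : κ < N) (x : G) :
    (List.ofFn fun k : Fin N => if (k : ℕ) = κ then x else 1).prod = x := by
  induction N generalizing κ with
  | zero => omega
  | succ N ih =>
    rw [List.ofFn_succ, List.prod_cons]
    by_cases hκ : κ = 0
    · subst hκ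
      have : (List.ofFn fun i : Fin N => if ((i.succ : Fin (N+1)) : ℕ) = 0 then x else 1).prod
          = 1 := by
        apply List.prod_eq_one
        intro y hy
        obtain ⟨k, rfl⟩ := List.mem_ofFn.mp hy
        simp
      simp [this]
    · have h0 : ¬((0 : Fin (N+1)) : ℕ) = κ := by simp [Ne.symm hκ]
      rw [if_neg h0, one_mul]
      have hrw : (fun i : Fin N => if ((i.succ : Fin (N+1)) : ℕ) = κ then x else 1)
          = (fun i : Fin N => if (i : ℕ) = κ - 1 then x else 1) := by
        funext i
        have : ((i.succ : Fin (N+1)) : ℕ) = (i : ℕ) + 1 := rfl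
        rw [this]
        congr 1
        simp only [eq_iff_iff]
        omega
      rw [hrw, ih (by omega)]

end GroupLemmas

section Generic

variable {B : Type*} {M : CoxeterMatrix B} {W : Type*} [Group W] (cs : CoxeterSystem M W)

local prefix:100 "s" => cs.simple
local prefix:100 "π" => cs.wordProd
local prefix:100 "ris" => cs.rightInvSeq

theorem simple_ne_one (i : B) : s i ≠ 1 := by
  intro h
  have h1 := cs.length_simple i
  rw [h, cs.length_one] at h1
  omega

theorem rightInvSeq_append (l₁ l₂ : List B) :
    ris (l₁ ++ l₂) = (ris l₁).map (fun t => (π l₂)⁻¹ * t * π l₂) ++ ris l₂ := by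
  induction l₁ with
  | nil => simp
  | cons i l₁ ih =>
    rw [List.cons_append, rightInvSeq_cons, rightInvSeq_cons, ih, cs.wordProd_append,
      List.map_cons, List.cons_append]
    congr 1
    rw [mul_inv_rev]
    group

theorem rightInvSeq_of_pairwise_commute (l : List B) (hnd : l.Nodup)
    (h : ∀ p ∈ l, ∀ q ∈ l, p ≠ q → Commute (s p) (s q)) :
    ris l = l.map cs.simple := by
  induction l with
  | nil => simp
  | cons p l ih =>
    rw [rightInvSeq_cons, List.map_cons]
    have hcomm : Commute (s p) (π l) := by
      apply Commute.list_prod_right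
      intro x hx
      obtain ⟨q, hq, rfl⟩ := List.mem_map.mp hx
      exact h p List.mem_cons_self q (List.mem_cons_of_mem _ hq)
        (fun hc => (List.nodup_cons.mp hnd).1 (hc ▸ hq))
    congr 1
    · have := hcomm.eq
      calc (π l)⁻¹ * (s p) * π l = (π l)⁻¹ * ((s p) * π l) := by group
        _ = (π l)⁻¹ * (π l * (s p)) := by rw [this]
        _ = s p := by group
    · exact ih (List.nodup_cons.mp hnd).2
        (fun x hx y hy hxy => h x (List.mem_cons_of_mem _ hx) y (List.mem_cons_of_mem _ hy) hxy)

end Generic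

end ProofAux



namespace ProofAux

section Main
set_option linter.unusedSectionVars false

variable {B : Type*} [Fintype B] [DecidableEq B] {M : CoxeterMatrix B}
  {W : Type*} [Group W] (cs : CoxeterSystem M W)
  (n : B → ℕ)
  (Mn : CoxeterMatrix ((i : B) × Fin (n i)))
  {Wn : Type*} [Group Wn] (csn : CoxeterSystem Mn Wn)

/-- The block of generators replacing a single generator. -/
def blockW (i : B) : List ((i : B) × Fin (n i)) :=
  List.ofFn fun k : Fin (n i) => (⟨i, k⟩ : (i : B) × Fin (n i))

theorem expandWord_cons (i : B) (ω : List B) :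
    expandWord n (i :: ω) = blockW n i ++ expandWord n ω :=
  List.flatMap_cons

variable
  (hn : ∀ i : B, 1 ≤ n i)
  (hcomp : ∀ i j : B, (finGraph M).Reachable i j → n i = n j)
  (hMn : ∀ p q : (i : B) × Fin (n i), p ≠ q →
      Mn p q =
        if (finGraph M).Reachable p.1 q.1 then
          (if (p.2 : ℕ) = (q.2 : ℕ) then M p.1 q.1 else 2)
        else M p.1 q.1)

theorem commute_simple_of_Mn_two {p q : (i : B) × Fin (n i)} (h2 : Mn p q = 2) :
    Commute (csn.simple p) (csn.simple q) := by
  have h := csn.simple_mul_simple_pow p q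
  rw [h2] at h
  have h1 : csn.simple p * csn.simple q * (csn.simple p * csn.simple q) = 1 := by
    rw [← pow_two]; exact h
  have h2' : csn.simple p * csn.simple q = (csn.simple p * csn.simple q)⁻¹ :=
    eq_inv_of_mul_eq_one_left h1
  unfold Commute SemiconjBy
  rw [h2', mul_inv_rev, csn.inv_simple, csn.inv_simple]

include hMn in
theorem Mn_same (i : B) {k l : Fin (n i)} (h : k ≠ l) :
    Mn ⟨i, k⟩ ⟨i, l⟩ = 2 := by
  have hne : (⟨i, k⟩ : (i : B) × Fin (n i)) ≠ ⟨i, l⟩ := by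
    intro hc
    exact h (eq_of_heq (Sigma.mk.inj_iff.mp hc).2)
  rw [hMn _ _ hne, if_pos (SimpleGraph.Reachable.refl i),
    if_neg (fun hc => h (Fin.ext hc))]

include hMn in
theorem Mn_cross {i j : B} (hij : i ≠ j) (hM2 : M i j = 2) (k : Fin (n i)) (l : Fin (n j)) :
    Mn ⟨i, k⟩ ⟨j, l⟩ = 2 := by
  have hne : (⟨i, k⟩ : (i : B) × Fin (n i)) ≠ ⟨j, l⟩ := by
    intro hc
    exact hij (Sigma.mk.inj_iff.mp hc).1
  rw [hMn _ _ hne]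
  by_cases hreach : (finGraph M).Reachable i j
  · rw [if_pos hreach]
    by_cases hval : (k : ℕ) = (l : ℕ)
    · rw [if_pos hval]; exact hM2
    · rw [if_neg hval]
  · rw [if_neg hreach]; exact hM2

include hMn in
theorem block_pairwise_commute (i : B) :
    ∀ p ∈ blockW n i, ∀ q ∈ blockW n i, p ≠ q →
      Commute (csn.simple p) (csn.simple q) := by
  intro p hp q hq hpq
  obtain ⟨k, rfl⟩ := List.mem_ofFn.mp hp
  obtain ⟨l, rfl⟩ := List.mem_ofFn.mp hq
  have hkl : k ≠ l := fun hc => hpq (hc ▸ rfl)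
  exact commute_simple_of_Mn_two n Mn csn (Mn_same n Mn hMn i hkl)

theorem blockW_map_simple (i : B) :
    (blockW n i).map csn.simple = List.ofFn fun k : Fin (n i) => csn.simple ⟨i, k⟩ :=
  List.map_ofFn ..

include hMn in
theorem blockProd_sq (i : B) :
    csn.wordProd (blockW n i) * csn.wordProd (blockW n i) = 1 := by
  have h1 : csn.wordProd (blockW n i) = (List.ofFn fun k : Fin (n i) => csn.simple ⟨i, k⟩).prod := by
    rw [CoxeterSystem.wordProd, blockW_map_simple]
  rw [h1, ← pow_two,
    prod_ofFn_pow _ 2 (fun k l hkl =>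
      commute_simple_of_Mn_two n Mn csn (Mn_same n Mn hMn i hkl))]
  apply List.prod_eq_one
  intro x hx
  obtain ⟨k, rfl⟩ := List.mem_ofFn.mp hx
  exact csn.simple_sq ⟨i, k⟩

include hcomp hMn in
theorem fgen_liftable : M.IsLiftable (fun i => csn.wordProd (blockW n i)) := by
  intro i j
  simp only
  by_cases hij : i = j
  · subst hij
    rw [M.diagonal, pow_one]
    exact blockProd_sq n Mn csn hMn i
  by_cases h0 : M i j = 0
  · rw [h0, pow_zero]
  by_cases h2 : M i j = 2
  · rw [h2]
    have hc : Commute (csn.wordProd (blockW n i)) (csn.wordProd (blockW n j)) := by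
      apply Commute.list_prod_right
      intro y hy
      obtain ⟨q, hq, rfl⟩ := List.mem_map.mp hy
      apply (Commute.list_prod_right _ _ ?_).symm
      intro x hx
      obtain ⟨p, hp, rfl⟩ := List.mem_map.mp hx
      obtain ⟨k, rfl⟩ := List.mem_ofFn.mp hp
      obtain ⟨l, rfl⟩ := List.mem_ofFn.mp hq
      exact (commute_simple_of_Mn_two n Mn csn (Mn_cross n Mn hMn hij h2 k l)).symm
    rw [hc.mul_pow, pow_two, pow_two, blockProd_sq n Mn csn hMn i,
      blockProd_sq n Mn csn hMn j, one_mul]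
  · -- the braid case `M i j ≥ 3`
    have h3 : 3 ≤ M i j := by
      have := M.off_diagonal i j hij
      omega
    have hreach : (finGraph M).Reachable i j := SimpleGraph.Adj.reachable ⟨hij, h3⟩
    have hnij : n i = n j := hcomp i j hreach
    set a : Fin (n i) → Wn := fun k => csn.simple ⟨i, k⟩ with ha
    set b : Fin (n i) → Wn := fun k => csn.simple ⟨j, Fin.cast hnij k⟩ with hb
    have hMn_ab : ∀ k l : Fin (n i), Mn ⟨i, k⟩ ⟨j, Fin.cast hnij l⟩
        = if (k : ℕ) = (l : ℕ) then M i j else 2 := by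
      intro k l
      have hne : (⟨i, k⟩ : (i : B) × Fin (n i)) ≠ ⟨j, Fin.cast hnij l⟩ := by
        intro hc
        exact hij (Sigma.mk.inj_iff.mp hc).1
      rw [hMn _ _ hne, if_pos hreach]
      rfl
    have hab : ∀ k l : Fin (n i), k ≠ l → Commute (a k) (b l) := by
      intro k l hkl
      apply commute_simple_of_Mn_two n Mn csn
      rw [hMn_ab k l, if_neg (fun hc => hkl (Fin.ext hc))]
    have haa : ∀ k l : Fin (n i), k ≠ l → Commute (a k) (a l) := by
      intro k l hkl
      exact commute_simple_of_Mn_two n Mn csn (Mn_same n Mn hMn i hkl)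
    have hbb : ∀ k l : Fin (n i), k ≠ l → Commute (b k) (b l) := by
      intro k l hkl
      refine commute_simple_of_Mn_two n Mn csn (Mn_same n Mn hMn j ?_)
      exact fun hc => hkl (by
        apply Fin.ext
        have : ((Fin.cast hnij k : Fin (n j)) : ℕ) = ((Fin.cast hnij l : Fin (n j)) : ℕ) :=
          congrArg Fin.val hc
        simpa using this)
    have hblocki : csn.wordProd (blockW n i) = (List.ofFn a).prod := by
      rw [CoxeterSystem.wordProd, blockW_map_simple]
    have hblockj : csn.wordProd (blockW n j) = (List.ofFn b).prod := by
      rw [CoxeterSystem.wordProd, blockW_map_simple]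
      congr 1
      apply List.ext_getElem
      · simp [hnij]
      · intro idx h1 h2
        rw [List.getElem_ofFn, List.getElem_ofFn]
        rfl
    rw [hblocki, hblockj, prod_ofFn_mul_prod_ofFn a b hab,
      prod_ofFn_pow _ (M i j) (fun k l hkl =>
        ((haa k l hkl).mul_right (hab k l hkl)).mul_left
          (((hab l k (Ne.symm hkl)).symm).mul_right (hbb k l hkl)))]
    apply List.prod_eq_one
    intro x hx
    obtain ⟨k, rfl⟩ := List.mem_ofFn.mp hx
    have := csn.simple_mul_simple_pow ⟨i, k⟩ ⟨j, Fin.cast hnij k⟩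
    rw [hMn_ab k k, if_pos rfl] at this
    exact this

/-- The homomorphism `φ`. -/
noncomputable def phiHom : W →* Wn :=
  cs.lift ⟨fun i => csn.wordProd (blockW n i), fgen_liftable n Mn csn hcomp hMn⟩

theorem phiHom_simple (i : B) :
    phiHom cs n Mn csn hcomp hMn (cs.simple i) = csn.wordProd (blockW n i) :=
  cs.lift_apply_simple _ i

theorem phiHom_wordProd (ω : List B) :
    phiHom cs n Mn csn hcomp hMn (cs.wordProd ω) = csn.wordProd (expandWord n ω) := by
  induction ω with
  | nil => simp [expandWord]
  | cons i ω ih =>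
    rw [cs.wordProd_cons, map_mul, ih, phiHom_simple, expandWord_cons, csn.wordProd_append]

include hcomp hMn in
theorem proj_liftable (κ : ℕ) :
    Mn.IsLiftable (fun p => if (p.2 : ℕ) = min κ (n p.1 - 1) then cs.simple p.1 else 1) := by
  intro p q
  simp only
  by_cases hpq : p = q
  · subst hpq
    rw [Mn.diagonal, pow_one]
    by_cases hsel : (p.2 : ℕ) = min κ (n p.1 - 1)
    · rw [if_pos hsel]; exact cs.simple_mul_simple_self p.1
    · rw [if_neg hsel, one_mul]
  rw [hMn p q hpq]
  by_cases hreach : (finGraph M).Reachable p.1 q.1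
  · rw [if_pos hreach]
    have hmin : min κ (n p.1 - 1) = min κ (n q.1 - 1) := by rw [hcomp _ _ hreach]
    by_cases hval : (p.2 : ℕ) = (q.2 : ℕ)
    · rw [if_pos hval]
      by_cases hsel : (p.2 : ℕ) = min κ (n p.1 - 1)
      · rw [if_pos hsel, if_pos (by rw [← hmin, ← hval]; exact hsel)]
        exact cs.simple_mul_simple_pow p.1 q.1
      · rw [if_neg hsel, if_neg (by rw [← hmin, ← hval]; exact hsel), one_mul, one_pow]
    · rw [if_neg hval]
      by_cases hsel1 : (p.2 : ℕ) = min κ (n p.1 - 1)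
      · have hsel2 : ¬((q.2 : ℕ) = min κ (n q.1 - 1)) := by
          rw [← hmin]
          intro hc
          exact hval (hsel1.trans hc.symm)
        rw [if_pos hsel1, if_neg hsel2, mul_one]
        exact cs.simple_sq p.1
      · rw [if_neg hsel1, one_mul]
        by_cases hsel2 : (q.2 : ℕ) = min κ (n q.1 - 1)
        · rw [if_pos hsel2]
          exact cs.simple_sq q.1
        · rw [if_neg hsel2, one_pow]
  · rw [if_neg hreach]
    have hne : p.1 ≠ q.1 := by
      intro hc
      exact hreach (hc ▸ SimpleGraph.Reachable.refl p.1)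
    have hM02 : M p.1 q.1 = 0 ∨ M p.1 q.1 = 2 := by
      have hnadj : ¬ (finGraph M).Adj p.1 q.1 := fun ha => hreach ha.reachable
      have h3 : ¬ 3 ≤ M p.1 q.1 := fun h3 => hnadj ⟨hne, h3⟩
      have h1 := M.off_diagonal p.1 q.1 hne
      omega
    rcases hM02 with hM0 | hM2
    · rw [hM0, pow_zero]
    · rw [hM2]
      by_cases hsel1 : (p.2 : ℕ) = min κ (n p.1 - 1) <;>
        by_cases hsel2 : (q.2 : ℕ) = min κ (n q.1 - 1)
      · rw [if_pos hsel1, if_pos hsel2]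
        have := cs.simple_mul_simple_pow p.1 q.1
        rwa [hM2] at this
      · rw [if_pos hsel1, if_neg hsel2, mul_one]
        exact cs.simple_sq p.1
      · rw [if_neg hsel1, if_pos hsel2, one_mul]
        exact cs.simple_sq q.1
      · rw [if_neg hsel1, if_neg hsel2, one_mul, one_pow]

/-- The projection homomorphisms `Wn →* W`. -/
noncomputable def projHom (κ : ℕ) : Wn →* W :=
  csn.lift ⟨_, proj_liftable cs n Mn hcomp hMn κ⟩

theorem projHom_simple (κ : ℕ) (p : (i : B) × Fin (n i)) :
    projHom cs n Mn csn hcomp hMn κ (csn.simple p)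
      = if (p.2 : ℕ) = min κ (n p.1 - 1) then cs.simple p.1 else 1 :=
  csn.lift_apply_simple _ p

include hn in
theorem projHom_phiHom (κ : ℕ) (w : W) :
    projHom cs n Mn csn hcomp hMn κ (phiHom cs n Mn csn hcomp hMn w) = w := by
  have h : (projHom cs n Mn csn hcomp hMn κ).comp (phiHom cs n Mn csn hcomp hMn)
      = MonoidHom.id W := by
    apply cs.ext_simple
    intro i
    rw [MonoidHom.comp_apply, MonoidHom.id_apply, phiHom_simple]
    rw [CoxeterSystem.wordProd, MonoidHom.map_list_prod, List.map_map, blockW]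
    rw [List.map_ofFn]
    have hrw : (projHom cs n Mn csn hcomp hMn κ ∘ csn.simple) ∘
          (fun k : Fin (n i) => (⟨i, k⟩ : (j : B) × Fin (n j)))
        = fun k : Fin (n i) => if (k : ℕ) = min κ (n i - 1) then cs.simple i else 1 := by
      funext k
      simp only [Function.comp_apply]
      rw [projHom_simple]
    rw [hrw, prod_ofFn_ite (by have := hn i; omega) (cs.simple i)]
  calc projHom cs n Mn csn hcomp hMn κ (phiHom cs n Mn csn hcomp hMn w)
      = ((projHom cs n Mn csn hcomp hMn κ).comp (phiHom cs n Mn csn hcomp hMn)) w := rfl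
    _ = w := by rw [h, MonoidHom.id_apply]

include hn in
theorem phiHom_injective : Function.Injective (phiHom cs n Mn csn hcomp hMn) :=
  Function.LeftInverse.injective (projHom_phiHom cs n Mn csn hn hcomp hMn 0)

include hn hcomp hMn in
theorem projHom_expand (κ : ℕ) (ω : List B) :
    projHom cs n Mn csn hcomp hMn κ (csn.wordProd (expandWord n ω)) = cs.wordProd ω := by
  rw [← phiHom_wordProd cs n Mn csn hcomp hMn, projHom_phiHom cs n Mn csn hn hcomp hMn]

theorem nodup_blockW (i : B) : (blockW n i).Nodup :=
  List.nodup_ofFn.mpr (fun a b hab => eq_of_heq (Sigma.mk.inj_iff.mp hab).2)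

include hMn in
theorem ris_blockW (i : B) :
    csn.rightInvSeq (blockW n i) = (blockW n i).map csn.simple :=
  rightInvSeq_of_pairwise_commute csn (blockW n i) (nodup_blockW n i)
    (block_pairwise_commute n Mn csn hMn i)

include cs hn hcomp hMn in
theorem simple_block_injective (i : B) (k l : Fin (n i))
    (h : csn.simple ⟨i, k⟩ = csn.simple ⟨i, l⟩) : k = l := by
  by_contra hkl
  have h1 := congrArg (projHom cs n Mn csn hcomp hMn (k : ℕ)) h
  rw [projHom_simple, projHom_simple] at h1
  have hmin : min (k : ℕ) (n i - 1) = (k : ℕ) := by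
    have := k.isLt; omega
  rw [if_pos (by rw [hmin]), if_neg (by rw [hmin]; exact fun hc => hkl (Fin.ext hc).symm)] at h1
  exact simple_ne_one cs i h1

include hMn in
theorem mem_ris_expand {ω : List B} {t : Wn}
    (ht : t ∈ csn.rightInvSeq (expandWord n ω)) :
    ∃ (j : B) (ω₂ : List B) (k : Fin (n j)),
      ((cs.wordProd ω₂)⁻¹ * cs.simple j * cs.wordProd ω₂) ∈ cs.rightInvSeq ω ∧
      t = (csn.wordProd (expandWord n ω₂))⁻¹ * csn.simple ⟨j, k⟩
            * csn.wordProd (expandWord n ω₂) := by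
  induction ω with
  | nil => simp [expandWord] at ht
  | cons i ω ih =>
    rw [expandWord_cons, rightInvSeq_append] at ht
    rcases List.mem_append.mp ht with h1 | h1
    · obtain ⟨t', ht', rfl⟩ := List.mem_map.mp h1
      rw [ris_blockW n Mn csn hMn] at ht'
      obtain ⟨p, hp, rfl⟩ := List.mem_map.mp ht'
      obtain ⟨k, rfl⟩ := List.mem_ofFn.mp hp
      refine ⟨i, ω, k, ?_, rfl⟩
      rw [rightInvSeq_cons]
      exact List.mem_cons_self
    · obtain ⟨j, ω₂, k, hmem, rfl⟩ := ih h1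
      refine ⟨j, ω₂, k, ?_, rfl⟩
      rw [rightInvSeq_cons]
      exact List.mem_cons_of_mem _ hmem

include hn hcomp hMn in
theorem nodup_ris_expand {ω : List B} (hred : cs.IsReduced ω) :
    (csn.rightInvSeq (expandWord n ω)).Nodup := by
  induction ω with
  | nil => simp [expandWord]
  | cons i ω ih =>
    have hredω : cs.IsReduced ω := by
      have := hred.drop 1
      simpa using this
    rw [expandWord_cons, rightInvSeq_append, List.nodup_append]
    refine ⟨?_, ih hredω, ?_⟩
    · apply List.Nodup.map_on
      · intro x _ y _ hxy
        exact mul_left_cancel (mul_right_cancel hxy)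
      · rw [ris_blockW n Mn csn hMn]
        apply List.Nodup.map_on
        · intro p hp q hq hpq
          obtain ⟨k, rfl⟩ := List.mem_ofFn.mp hp
          obtain ⟨l, rfl⟩ := List.mem_ofFn.mp hq
          rw [simple_block_injective cs n Mn csn hn hcomp hMn i k l hpq]
        · exact nodup_blockW n i
    · intro t htA _ htR rfl
      obtain ⟨t', ht', rfl⟩ := List.mem_map.mp htA
      rw [ris_blockW n Mn csn hMn] at ht'
      obtain ⟨p, hp, rfl⟩ := List.mem_map.mp ht'
      obtain ⟨k, rfl⟩ := List.mem_ofFn.mp hp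
      obtain ⟨j, ω₂, l, hmem, heq⟩ := mem_ris_expand cs n Mn csn hMn htR
      set P := projHom cs n Mn csn hcomp hMn (k : ℕ) with hP
      have happ := congrArg P heq
      have hmin : min (k : ℕ) (n i - 1) = (k : ℕ) := by
        have := k.isLt; omega
      simp only [map_mul, map_inv] at happ
      rw [projHom_expand cs n Mn csn hn hcomp hMn, projHom_expand cs n Mn csn hn hcomp hMn,
        projHom_simple, projHom_simple] at happ
      rw [if_pos (by rw [hmin])] at happ
      by_cases hsel : (l : ℕ) = min (k : ℕ) (n j - 1)
      · rw [if_pos hsel] at happ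
        -- the left inversion of `i :: ω` appears again inside `ris ω`: contradiction
        have hnd := CoxeterSystem.IsReduced.nodup_rightInvSeq cs hred
        rw [rightInvSeq_cons] at hnd
        have hnotmem := (List.nodup_cons.mp hnd).1
        rw [happ] at hnotmem
        exact hnotmem hmem
      · rw [if_neg hsel] at happ
        have : cs.simple i = 1 := by
          have h2 := congrArg (fun x => cs.wordProd ω * x * (cs.wordProd ω)⁻¹) happ
          simp only at h2
          calc cs.simple i
              = cs.wordProd ω * ((cs.wordProd ω)⁻¹ * cs.simple i * cs.wordProd ω)
                * (cs.wordProd ω)⁻¹ := by group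
            _ = cs.wordProd ω * ((cs.wordProd ω₂)⁻¹ * 1 * cs.wordProd ω₂)
                * (cs.wordProd ω)⁻¹ := by rw [happ]
            _ = 1 := by group
        exact simple_ne_one cs i this

include hn hcomp hMn in
theorem isReduced_expand {ω : List B} (hred : cs.IsReduced ω) :
    csn.IsReduced (expandWord n ω) :=
  isReduced_of_nodup_rightInvSeq csn _ (nodup_ris_expand cs n Mn csn hn hcomp hMn hred)

theorem length_expandWord [Fintype B] (ω : List B) :
    (expandWord n ω).length = ∑ i : B, n i * ω.count i := by
  induction ω with
  | nil => simp [expandWord]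
  | cons j ω ih =>
    rw [expandWord_cons, List.length_append, ih, blockW, List.length_ofFn]
    have hcnt : ∀ i : B, (j :: ω).count i = ω.count i + if j = i then 1 else 0 := by
      intro i
      rw [List.count_cons]
      simp only [beq_iff_eq]
    simp only [hcnt, Nat.mul_add]
    rw [Finset.sum_add_distrib]
    have h2 : ∑ i : B, n i * (if j = i then 1 else 0) = n j := by
      simp only [mul_ite, mul_one, mul_zero]
      rw [Finset.sum_ite_eq Finset.univ j n]
      simp
    rw [h2, Nat.add_comm]

end Main

end ProofAux


/-- Let `W = ⟨S|M⟩` be a finite rank Coxeter system and `n : S → ℕ` with `n_i ≥ 1` and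
`n_i = n_j` whenever `C_i = C_j` (same connected component of `Graph'_S(W)`).  Let
`W̃_n = ⟨S_n|M_n⟩` be the Coxeter system with generators `s_{i,k}` (`1 ≤ k ≤ n_i`) and
labels `m_{s_{i,k},s_{j,l}} = m_{i,j}` if `C_i = C_j`, `k = l`; `= 2` if `C_i = C_j`,
`k ≠ l`; `= m_{i,j}` if `C_i ≠ C_j`.  Then `s_i ↦ s_{i,1}⋯s_{i,n_i}` extends to an
injective group homomorphism `φ_n : W → W̃_n` mapping reduced expressions to reduced
expressions, and `ψ̃_n(φ_n(w)) = Σ_i n_i·#{l : w_l = s_i}` for every reduced expression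
`w = w_1⋯w_k`. -/
theorem exists_injective_hom_to_doubled_coxeterSystem
    {B : Type*} [Fintype B] [DecidableEq B] {M : CoxeterMatrix B}
    {W : Type*} [Group W] (cs : CoxeterSystem M W)
    (n : B → ℕ) (hn : ∀ i : B, 1 ≤ n i)
    (hcomp : ∀ i j : B, (finGraph M).Reachable i j → n i = n j)
    (Mn : CoxeterMatrix ((i : B) × Fin (n i)))
    (hMn : ∀ p q : (i : B) × Fin (n i), p ≠ q →
      Mn p q =
        if (finGraph M).Reachable p.1 q.1 then
          (if (p.2 : ℕ) = (q.2 : ℕ) then M p.1 q.1 else 2)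
        else M p.1 q.1)
    {Wn : Type*} [Group Wn] (csn : CoxeterSystem Mn Wn) :
    ∃ φ : W →* Wn,
      (∀ i : B, φ (cs.simple i) =
        csn.wordProd (List.ofFn fun k : Fin (n i) => (⟨i, k⟩ : (i : B) × Fin (n i)))) ∧
      Function.Injective φ ∧
      (∀ ω : List B, cs.IsReduced ω →
        φ (cs.wordProd ω) = csn.wordProd (expandWord n ω) ∧
        csn.IsReduced (expandWord n ω)) ∧
      (∀ ω : List B, cs.IsReduced ω →
        csn.length (φ (cs.wordProd ω)) = ∑ i : B, n i * ω.count i) := by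
  refine ⟨ProofAux.phiHom cs n Mn csn hcomp hMn, ?_, ?_, ?_, ?_⟩
  · intro i
    exact ProofAux.phiHom_simple cs n Mn csn hcomp hMn i
  · exact ProofAux.phiHom_injective cs n Mn csn hn hcomp hMn
  · intro ω hω
    exact ⟨ProofAux.phiHom_wordProd cs n Mn csn hcomp hMn ω,
      ProofAux.isReduced_expand cs n Mn csn hn hcomp hMn hω⟩
  · intro ω hω
    rw [ProofAux.phiHom_wordProd cs n Mn csn hcomp hMn ω]
    have hr := ProofAux.isReduced_expand cs n Mn csn hn hcomp hMn hω
    rw [CoxeterSystem.IsReduced] at hr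
    rw [hr, ProofAux.length_expandWord]
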